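/- Let G be a group acting on a topological space X, and let N be a subgroup of G of finite index. Call a point x ∈ X a limit point of a subgroup H ≤ G if there exist a point y ∈ X and a sequence (hₙ) of pairwise distinct elements of H such that the sequence hₙ·y converges to x. Then the set of limit points of N equals the set of limit points of G. -/

import Mathlib

/-- The set of limit points of a subgroup `H` of `G` acting on a topological space `X`:
points `x` such that some injective sequence `(hₙ)` in `H` and some point `y` satisfy
`hₙ • y → x`. -/
def Subgroup.limitPoints {G : Type*} [Group G] (X : Type*) [TopologicalSpace X]
    [MulAction G X] (H : Subgroup G) : Set X :=
  {x | ∃ y : X, ∃ h : ℕ → H, Function.Injective h ∧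
    Filter.Tendsto (fun n => (h n : G) • y) Filter.atTop (nhds x)}

/-- Let `G` be a group acting on a topological space `X` and let `N ≤ G` be a
subgroup of finite index. Then the limit points of `N` coincide with the limit points of `G`
(i.e. of the full subgroup `⊤`). -/
theorem limitPoints_eq_of_finiteIndex {G : Type*} [Group G] (X : Type*) [TopologicalSpace X]
    [MulAction G X] (N : Subgroup G) (hN : N.FiniteIndex) :
    N.limitPoints X = (⊤ : Subgroup G).limitPoints X := by
  ext x
  constructor
  · rintro ⟨y, h, hinj, htend⟩
    refine ⟨y, fun n => ⟨(h n : G), trivial⟩, ?_, htend⟩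
    intro a b hab
    simp only [Subtype.mk.injEq, SetLike.coe_eq_coe] at hab
    exact hinj (Subtype.ext (by have := congrArg (fun z : (⊤ : Subgroup G) => (z : G)) hab; exact this))
  · rintro ⟨y, h, hinj, htend⟩
    haveI := hN
    haveI : Finite (G ⧸ N) := N.finite_quotient_of_finiteIndex
    set g : ℕ → G := fun n => (h n : G) with hg
    have hginj : Function.Injective g := fun a b hab => hinj (Subtype.ext hab)
    obtain ⟨q, hq⟩ := Finite.exists_infinite_fiber (fun n => (QuotientGroup.mk (g n)⁻¹ : G ⧸ N))
    have hS : {n | (QuotientGroup.mk (g n)⁻¹ : G ⧸ N) = q}.Infinite := by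
      rw [Set.infinite_coe_iff] at hq
      exact hq
    set p : ℕ → Prop := fun n => (QuotientGroup.mk (g n)⁻¹ : G ⧸ N) = q with hp
    have hpinf : (setOf p).Infinite := hS
    obtain ⟨c, hc⟩ := Quotient.exists_rep q
    -- for n with p n, g n * c ∈ N
    have hmem : ∀ n, p n → g n * c ∈ N := by
      intro n hn
      have : (QuotientGroup.mk (g n)⁻¹ : G ⧸ N) = QuotientGroup.mk c := by
        rw [hn, ← hc]
      simpa using QuotientGroup.eq.mp this
    refine ⟨c⁻¹ • y, fun m => ⟨g (Nat.nth p m) * c,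
      hmem _ (Nat.nth_mem_of_infinite hpinf m)⟩, ?_, ?_⟩
    · intro a b hab
      have : g (Nat.nth p a) = g (Nat.nth p b) := by
        have := Subtype.ext_iff.mp hab
        simpa using mul_right_cancel (Subtype.ext_iff.mp hab)
      exact (Nat.nth_injective hpinf) (hginj this)
    · have : Filter.Tendsto (fun m => g (Nat.nth p m) • y) Filter.atTop (nhds x) :=
        htend.comp (Nat.nth_strictMono hpinf).tendsto_atTop
      convert this using 2 with m
      rw [mul_smul, smul_inv_smul]
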